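/- Let σ ∈ ℂ with Re σ > 0 and let k be a nonzero real number. Then the polynomial P(λ) = λ⁴ − λ² + σλ + k², counted with multiplicity, has exactly two roots with strictly positive real part and exactly two roots with strictly negative real part. -/

import Mathlib

open Polynomial Real Filter Set Topology

noncomputable def thAux (z : ℂ) (y : ℝ) : ℝ :=
  if 0 < z.re then Real.pi - Real.arctan ((y - z.im) / z.re)
  else Real.arctan ((y - z.im) / (-z.re))

private lemma sqrtW_ne (u : ℝ) : Real.sqrt (1 + u ^ 2) ≠ 0 := by positivity

private lemma cancel1 (c u : ℝ) : (c * Real.sqrt (1 + u ^ 2)) * (1 / Real.sqrt (1 + u ^ 2)) = c := by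
  rw [mul_one_div, mul_div_assoc, div_self (sqrtW_ne u), mul_one]

private lemma cancel2 (c u : ℝ) : (c * Real.sqrt (1 + u ^ 2)) * (u / Real.sqrt (1 + u ^ 2)) = c * u := by
  field_simp

lemma polarAux (z : ℂ) (hz : z.re ≠ 0) (y : ℝ) :
    Complex.I * y - z =
      (Real.sqrt (z.re ^ 2 + (y - z.im) ^ 2) : ℂ) *
        Complex.exp ((thAux z y : ℝ) * Complex.I) := by
  have hx : Complex.exp ((thAux z y : ℝ) * Complex.I)
      = (Real.cos (thAux z y) : ℂ) + (Real.sin (thAux z y) : ℂ) * Complex.I := by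
    rw [Complex.exp_mul_I]
    simp [Complex.ofReal_cos, Complex.ofReal_sin]
  rw [hx]
  have key : ∀ cs sn : ℝ, Real.sqrt (z.re ^ 2 + (y - z.im) ^ 2) * cs = -z.re →
      Real.sqrt (z.re ^ 2 + (y - z.im) ^ 2) * sn = y - z.im →
      Complex.I * y - z =
        (Real.sqrt (z.re ^ 2 + (y - z.im) ^ 2) : ℂ) * ((cs : ℂ) + (sn : ℂ) * Complex.I) := by
    intro cs sn h1 h2
    apply Complex.ext
    · simpa [Complex.mul_re] using h1.symm
    · simpa [Complex.mul_im] using h2.symm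
  rcases lt_or_gt_of_ne hz with hneg | hpos
  · -- z.re < 0
    obtain ⟨u, hu⟩ : ∃ u : ℝ, u = (y - z.im) / (-z.re) := ⟨_, rfl⟩
    have hth : thAux z y = Real.arctan u := by
      rw [thAux, if_neg (by linarith), hu]
    have hyu : -z.re * u = y - z.im := by
      rw [hu]; field_simp
    have hs : Real.sqrt (z.re ^ 2 + (y - z.im) ^ 2)
        = (-z.re) * Real.sqrt (1 + u ^ 2) := by
      have h9 : z.re ^ 2 + (y - z.im) ^ 2 = z.re ^ 2 * (1 + u ^ 2) := by
        rw [← hyu]; ring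
      rw [h9, Real.sqrt_mul (sq_nonneg _), Real.sqrt_sq_eq_abs, abs_of_neg hneg]
    apply key
    · rw [hth, Real.cos_arctan, hs, cancel1]
    · rw [hth, Real.sin_arctan, hs, cancel2, hyu]
  · -- 0 < z.re
    obtain ⟨u, hu⟩ : ∃ u : ℝ, u = (y - z.im) / z.re := ⟨_, rfl⟩
    have hth : thAux z y = Real.pi - Real.arctan u := by
      rw [thAux, if_pos hpos, hu]
    have hyu : z.re * u = y - z.im := by
      rw [hu]; field_simp
    have hs : Real.sqrt (z.re ^ 2 + (y - z.im) ^ 2)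
        = z.re * Real.sqrt (1 + u ^ 2) := by
      have h9 : z.re ^ 2 + (y - z.im) ^ 2 = z.re ^ 2 * (1 + u ^ 2) := by
        rw [← hyu]; ring
      rw [h9, Real.sqrt_mul (sq_nonneg _), Real.sqrt_sq_eq_abs, abs_of_pos hpos]
    apply key
    · rw [hth, Real.cos_pi_sub, Real.cos_arctan, hs]
      rw [mul_neg, cancel1]
    · rw [hth, Real.sin_pi_sub, Real.sin_arctan, hs, cancel2, hyu]

noncomputable def ThM (S : Multiset ℂ) (y : ℝ) : ℝ := (S.map fun z => thAux z y).sum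

noncomputable def RhM (S : Multiset ℂ) (y : ℝ) : ℝ :=
  (S.map fun z => Real.sqrt (z.re ^ 2 + (y - z.im) ^ 2)).prod

lemma ThM_cons (a : ℂ) (s : Multiset ℂ) (y : ℝ) :
    ThM (a ::ₘ s) y = thAux a y + ThM s y := by
  simp [ThM]

lemma RhM_pos (S : Multiset ℂ) (h : ∀ z ∈ S, z.re ≠ 0) (y : ℝ) : 0 < RhM S y := by
  refine Multiset.prod_pos ?_
  intro r hr
  obtain ⟨z, hz, rfl⟩ := Multiset.mem_map.mp hr
  have : (0:ℝ) < z.re ^ 2 + (y - z.im) ^ 2 := by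
    have := h z hz
    positivity
  exact Real.sqrt_pos.mpr this

lemma prod_polar (S : Multiset ℂ) (h : ∀ z ∈ S, z.re ≠ 0) (y : ℝ) :
    (S.map fun z => Complex.I * y - z).prod
      = (RhM S y : ℂ) * Complex.exp ((ThM S y : ℝ) * Complex.I) := by
  induction S using Multiset.induction with
  | empty => simp [ThM, RhM]
  | cons a s ih =>
    have ha : a.re ≠ 0 := h a (Multiset.mem_cons_self a s)
    have hs : ∀ z ∈ s, z.re ≠ 0 := fun z hz => h z (Multiset.mem_cons_of_mem hz)
    rw [Multiset.map_cons, Multiset.prod_cons, polarAux a ha y, ih hs]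
    have h1 : ThM (a ::ₘ s) y = thAux a y + ThM s y := ThM_cons a s y
    have h2 : RhM (a ::ₘ s) y
        = Real.sqrt (a.re ^ 2 + (y - a.im) ^ 2) * RhM s y := by
      simp [RhM]
    rw [h1, h2]
    push_cast
    rw [add_mul, Complex.exp_add]
    ring

lemma thAux_cont (z : ℂ) : Continuous (thAux z) := by
  unfold thAux
  split_ifs with h
  · exact continuous_const.sub
      (Real.continuous_arctan.comp ((continuous_id.sub continuous_const).div_const _))
  · exact Real.continuous_arctan.comp ((continuous_id.sub continuous_const).div_const _)

lemma ThM_cont (S : Multiset ℂ) : Continuous (ThM S) := by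
  induction S using Multiset.induction with
  | empty =>
    have : ThM 0 = fun _ => 0 := by funext y; simp [ThM]
    rw [this]; exact continuous_const
  | cons a s ih =>
    have : ThM (a ::ₘ s) = fun y => thAux a y + ThM s y := by
      funext y; exact ThM_cons a s y
    rw [this]
    exact (thAux_cont a).add ih

lemma tendsto_thAux_top (z : ℂ) (hz : z.re ≠ 0) :
    Tendsto (thAux z) atTop (𝓝 (π / 2)) := by
  unfold thAux
  split_ifs with h
  · have hin : Tendsto (fun y : ℝ => (y - z.im) / z.re) atTop atTop :=
      (tendsto_atTop_add_const_right atTop (-z.im) tendsto_id).atTop_div_const h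
    have harc : Tendsto (fun y : ℝ => Real.arctan ((y - z.im) / z.re)) atTop (𝓝 (π / 2)) :=
      (Real.tendsto_arctan_atTop.mono_right nhdsWithin_le_nhds).comp hin
    have := (tendsto_const_nhds (x := π) (f := atTop (α := ℝ))).sub harc
    have hval : π - π / 2 = π / 2 := by ring
    rw [← hval]
    exact this
  · have hz' : 0 < -z.re := by
      rcases lt_or_gt_of_ne hz with h1 | h1
      · linarith
      · exact absurd h1 h
    have hin : Tendsto (fun y : ℝ => (y - z.im) / (-z.re)) atTop atTop :=
      (tendsto_atTop_add_const_right atTop (-z.im) tendsto_id).atTop_div_const hz'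
    exact (Real.tendsto_arctan_atTop.mono_right nhdsWithin_le_nhds).comp hin

lemma tendsto_thAux_bot (z : ℂ) (hz : z.re ≠ 0) :
    Tendsto (thAux z) atBot (𝓝 (if 0 < z.re then 3 * (π / 2) else -(π / 2))) := by
  unfold thAux
  split_ifs with h
  · have hin : Tendsto (fun y : ℝ => (y - z.im) / z.re) atBot atBot :=
      (tendsto_atBot_add_const_right atBot (-z.im) tendsto_id).atBot_div_const h
    have harc : Tendsto (fun y : ℝ => Real.arctan ((y - z.im) / z.re)) atBot (𝓝 (-(π / 2))) :=
      (Real.tendsto_arctan_atBot.mono_right nhdsWithin_le_nhds).comp hin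
    have := (tendsto_const_nhds (x := π) (f := atBot (α := ℝ))).sub harc
    have hval : π - -(π / 2) = 3 * (π / 2) := by ring
    rw [← hval]
    exact this
  · have hz' : 0 < -z.re := by
      rcases lt_or_gt_of_ne hz with h1 | h1
      · linarith
      · exact absurd h1 h
    have hin : Tendsto (fun y : ℝ => (y - z.im) / (-z.re)) atBot atBot :=
      (tendsto_atBot_add_const_right atBot (-z.im) tendsto_id).atBot_div_const hz'
    exact (Real.tendsto_arctan_atBot.mono_right nhdsWithin_le_nhds).comp hin

lemma tendsto_ThM (S : Multiset ℂ) (l : Filter ℝ) (g : ℂ → ℝ)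
    (h : ∀ z ∈ S, Tendsto (thAux z) l (𝓝 (g z))) :
    Tendsto (ThM S) l (𝓝 (S.map g).sum) := by
  induction S using Multiset.induction with
  | empty =>
    have : ThM 0 = fun _ => 0 := by funext y; simp [ThM]
    rw [this]; simpa using tendsto_const_nhds
  | cons a s ih =>
    have h1 : ThM (a ::ₘ s) = fun y => thAux a y + ThM s y := by
      funext y; exact ThM_cons a s y
    rw [h1, Multiset.map_cons, Multiset.sum_cons]
    exact (h a (Multiset.mem_cons_self a s)).add
      (ih (fun z hz => h z (Multiset.mem_cons_of_mem hz)))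

open scoped Classical in
lemma sum_if_multiset (S : Multiset ℂ) (c d : ℝ) :
    (S.map fun z => if 0 < z.re then c else d).sum
      = ((S.filter fun z => 0 < z.re).card : ℝ) * c
        + ((S.filter fun z => ¬ 0 < z.re).card : ℝ) * d := by
  induction S using Multiset.induction with
  | empty => simp
  | cons a s ih =>
    rw [Multiset.map_cons, Multiset.sum_cons, ih, Multiset.filter_cons, Multiset.filter_cons]
    by_cases h : 0 < a.re
    · simp only [if_pos h, if_neg (show ¬¬0 < a.re from not_not_intro h)]
      simp only [Multiset.card_add, Multiset.card_singleton, Multiset.card_zero]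
      push_cast; ring
    · simp only [if_neg h, if_pos h]
      simp only [Multiset.card_add, Multiset.card_singleton, Multiset.card_zero]
      push_cast; ring

lemma reim_zero {A B : ℝ} (h : (A:ℂ) + (B:ℂ) * Complex.I = 0) : A = 0 ∧ B = 0 := by
  have h1 := congrArg Complex.re h
  have h2 := congrArg Complex.im h
  simp only [Complex.add_re, Complex.add_im, Complex.mul_re, Complex.mul_im,
    Complex.ofReal_re, Complex.ofReal_im, Complex.I_re, Complex.I_im,
    Complex.zero_re, Complex.zero_im, mul_zero, mul_one, zero_mul, add_zero,
    zero_add, sub_zero, zero_sub] at h1 h2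
  exact ⟨by linarith, by linarith⟩

lemma reim_eq {R c s A B : ℝ}
    (h : (R:ℂ) * ((c:ℂ) + (s:ℂ) * Complex.I) = (A:ℂ) + (B:ℂ) * Complex.I) :
    c * R = A ∧ s * R = B := by
  have h1 := congrArg Complex.re h
  have h2 := congrArg Complex.im h
  simp only [Complex.add_re, Complex.add_im, Complex.mul_re, Complex.mul_im,
    Complex.ofReal_re, Complex.ofReal_im, Complex.I_re, Complex.I_im,
    mul_zero, mul_one, zero_mul, add_zero, zero_add, sub_zero, zero_sub] at h1 h2
  constructor
  · linarith
  · linarith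

open scoped Classical in
/-- For `Re σ > 0` and `k ≠ 0`, the quartic `P(λ) = λ⁴ - λ² + σλ + k²` has, counted with
multiplicity, exactly two roots with positive real part and two with negative real part. -/
theorem stmt_11 (σ : ℂ) (hσ : 0 < σ.re) (k : ℝ) (hk : k ≠ 0)
    (P : Polynomial ℂ)
    (hP : P = X ^ 4 - X ^ 2 + C σ * X + C ((k : ℂ) ^ 2)) :
    Multiset.card (P.roots.filter fun z => 0 < z.re) = 2 ∧
      Multiset.card (P.roots.filter fun z => z.re < 0) = 2 := by
  have hk2 : (0:ℝ) < k ^ 2 := by positivity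
  have hPm : P.Monic := by
    rw [hP]
    have h4 : (X ^ 4 - X ^ 2 + C σ * X + C ((k : ℂ) ^ 2) : Polynomial ℂ)
        = X ^ 4 + (-(X ^ 2) + C σ * X + C ((k : ℂ) ^ 2)) := by ring
    rw [h4]
    apply monic_X_pow_add
    refine lt_of_le_of_lt (?_ : _ ≤ ((3:ℕ) : WithBot ℕ)) ?_
    · compute_degree!
    · exact_mod_cast (by norm_num : (3:ℕ) < 4)
  have hPne : P ≠ 0 := hPm.ne_zero
  have hdeg : P.natDegree = 4 := by
    rw [hP]
    compute_degree!
  have hcard : Multiset.card P.roots = 4 := by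
    rw [← hdeg]
    exact splits_iff_card_roots.mp (IsAlgClosed.splits P)
  have heval : ∀ y : ℝ, P.eval (Complex.I * y)
      = ((y^4 + y^2 + k^2 - y * σ.im : ℝ) : ℂ) + ((y * σ.re : ℝ) : ℂ) * Complex.I := by
    intro y
    have h1 : P.eval (Complex.I * y)
        = (Complex.I*y)^4 - (Complex.I*y)^2 + σ*(Complex.I*y) + (k:ℂ)^2 := by
      rw [hP]; simp
    rw [h1]
    have hI4 : (Complex.I:ℂ)^4 = 1 := by
      rw [show (4:ℕ) = 2*2 from rfl, pow_mul, Complex.I_sq]; ring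
    have h2 : (Complex.I*(y:ℂ))^4 - (Complex.I*(y:ℂ))^2 + σ*(Complex.I*(y:ℂ)) + (k:ℂ)^2
        = ((y:ℂ)^4 + (y:ℂ)^2 + (k:ℂ)^2) + σ*(y:ℂ)*Complex.I := by
      rw [mul_pow, mul_pow, Complex.I_sq, hI4]; ring
    rw [h2]
    apply Complex.ext
    · simp only [Complex.add_re, Complex.add_im, Complex.mul_re, Complex.mul_im,
        Complex.ofReal_re, Complex.ofReal_im, Complex.I_re, Complex.I_im]
      have : ((y:ℂ)^4).re = y^4 ∧ ((y:ℂ)^2).re = y^2 ∧ ((k:ℂ)^2).re = k^2 := by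
        constructor
        · simp [← Complex.ofReal_pow]
        constructor
        · simp [← Complex.ofReal_pow]
        · simp [← Complex.ofReal_pow]
      rw [this.1, this.2.1, this.2.2]
      ring
    · simp only [Complex.add_re, Complex.add_im, Complex.mul_re, Complex.mul_im,
        Complex.ofReal_re, Complex.ofReal_im, Complex.I_re, Complex.I_im]
      have : ((y:ℂ)^4).im = 0 ∧ ((y:ℂ)^2).im = 0 ∧ ((k:ℂ)^2).im = 0 := by
        constructor
        · simp [← Complex.ofReal_pow]
        constructor
        · simp [← Complex.ofReal_pow]
        · simp [← Complex.ofReal_pow]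
      rw [this.1, this.2.1, this.2.2]
      ring
  -- no roots on the imaginary axis
  have hax : ∀ z ∈ P.roots, z.re ≠ 0 := by
    intro z hz h0
    have hzr : P.eval z = 0 := isRoot_of_mem_roots hz
    have hz' : z = Complex.I * (z.im : ℂ) := by
      apply Complex.ext <;> simp [h0]
    rw [hz', heval z.im] at hzr
    obtain ⟨hre, him⟩ := reim_zero hzr
    have hzim : z.im = 0 := by
      rcases mul_eq_zero.mp him with h | h
      · exact h
      · exact absurd h (ne_of_gt hσ)
    rw [hzim] at hre
    norm_num at hre
    nlinarith
  -- polar factorization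
  have hfact : ∀ y : ℝ, P.eval (Complex.I * y)
      = (RhM P.roots y : ℂ) * Complex.exp ((ThM P.roots y : ℝ) * Complex.I) := by
    have hsplit : Splits P := IsAlgClosed.splits P
    have hprod := hsplit.eq_prod_roots_of_monic hPm
    intro y
    conv_lhs => rw [hprod]
    rw [eval_multiset_prod, Multiset.map_map]
    have hmc2 : (P.roots.map ((eval (Complex.I * (y:ℂ))) ∘ fun a => X - C a))
        = P.roots.map (fun z => Complex.I * y - z) := by
      apply Multiset.map_congr rfl
      intro z hz
      simp
    rw [hmc2, prod_polar P.roots hax y]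
  have hRpos : ∀ y : ℝ, 0 < RhM P.roots y := fun y => RhM_pos P.roots hax y
  have hkey : ∀ y : ℝ,
      Real.cos (ThM P.roots y) * RhM P.roots y = y^4 + y^2 + k^2 - y * σ.im ∧
      Real.sin (ThM P.roots y) * RhM P.roots y = y * σ.re := by
    intro y
    have h1 := (hfact y).symm.trans (heval y)
    rw [Complex.exp_mul_I] at h1
    have h2 : (RhM P.roots y : ℂ) * ((Real.cos (ThM P.roots y) : ℂ)
          + (Real.sin (ThM P.roots y) : ℂ) * Complex.I)
        = ((y^4 + y^2 + k^2 - y * σ.im : ℝ) : ℂ) + ((y * σ.re : ℝ) : ℂ) * Complex.I := by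
      rw [← h1]
      congr 2
      · simp [Complex.ofReal_cos]
      · simp [Complex.ofReal_sin]
    exact reim_eq h2
  set m := Multiset.card (P.roots.filter fun z => 0 < z.re) with hm
  set n := Multiset.card (P.roots.filter fun z => z.re < 0) with hn
  have hfil : (P.roots.filter fun z => z.re < 0) = (P.roots.filter fun z => ¬ 0 < z.re) := by
    apply Multiset.filter_congr
    intro z hz
    have hz0 := hax z hz
    constructor
    · intro h; exact not_lt.mpr (le_of_lt h)
    · intro h; exact lt_of_le_of_ne (not_lt.mp h) hz0
  have hmn : m + n = 4 := by
    rw [hm, hn, hfil]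
    rw [← Multiset.card_add, Multiset.filter_add_not]
    exact hcard
  have hbot : Tendsto (ThM P.roots) atBot
      (𝓝 ((m:ℝ) * (3 * (π/2)) + (n:ℝ) * (-(π/2)))) := by
    have h1 := tendsto_ThM P.roots atBot
      (fun z => if 0 < z.re then 3 * (π/2) else -(π/2))
      (fun z hz => tendsto_thAux_bot z (hax z hz))
    rw [sum_if_multiset] at h1
    rw [hn, hfil]
    exact h1
  have htop : Tendsto (ThM P.roots) atTop (𝓝 (2 * π)) := by
    have h1 := tendsto_ThM P.roots atTop (fun _ => π/2)
      (fun z hz => tendsto_thAux_top z (hax z hz))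
    have h2 : ((P.roots.map fun _ => π/2)).sum = 2 * π := by
      rw [Multiset.map_const', Multiset.sum_replicate, hcard]
      push_cast [nsmul_eq_mul]; ring
    rwa [h2] at h1
  -- normalized (shifted) argument function, kept opaque
  obtain ⟨Φ, hΦdef⟩ : ∃ f : ℝ → ℝ,
      f = fun y => ThM P.roots y + ((1 - (m:ℤ) : ℤ) : ℝ) * (2 * π) := ⟨_, rfl⟩
  have hΦcont : Continuous Φ := by
    rw [hΦdef]; exact (ThM_cont P.roots).add continuous_const
  have hsinΦ : ∀ y, Real.sin (Φ y) = Real.sin (ThM P.roots y) := by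
    intro y
    rw [hΦdef]
    exact Real.sin_add_int_mul_two_pi _ _
  have hcosΦ : ∀ y, Real.cos (Φ y) = Real.cos (ThM P.roots y) := by
    intro y
    rw [hΦdef]
    exact Real.cos_add_int_mul_two_pi _ _
  have hnr : (n:ℝ) = 4 - (m:ℝ) := by
    have : ((m+n : ℕ) : ℝ) = 4 := by rw [hmn]; norm_num
    push_cast at this
    linarith
  have hΦbot : Tendsto Φ atBot (𝓝 0) := by
    rw [hΦdef]
    have h1 := hbot.add (tendsto_const_nhds
      (x := ((1 - (m:ℤ) : ℤ) : ℝ) * (2 * π)) (f := atBot (α := ℝ)))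
    have h2 : (m:ℝ) * (3 * (π/2)) + (n:ℝ) * (-(π/2)) + ((1 - (m:ℤ) : ℤ) : ℝ) * (2 * π) = 0 := by
      rw [hnr]; push_cast; ring
    rwa [h2] at h1
  have hΦtop : Tendsto Φ atTop (𝓝 (2*π + ((1 - (m:ℤ) : ℤ) : ℝ) * (2 * π))) := by
    rw [hΦdef]
    exact htop.add tendsto_const_nhds
  -- signs of sin Φ
  have hsneg : ∀ y : ℝ, y < 0 → Real.sin (Φ y) < 0 := by
    intro y hy
    have h1 := (hkey y).2
    have h2 := hRpos y
    rw [← hsinΦ] at h1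
    have h3 : y * σ.re < 0 := mul_neg_of_neg_of_pos hy hσ
    by_contra hcon
    push_neg at hcon
    nlinarith
  have hspos : ∀ y : ℝ, 0 < y → 0 < Real.sin (Φ y) := by
    intro y hy
    have h1 := (hkey y).2
    have h2 := hRpos y
    rw [← hsinΦ] at h1
    have h3 : 0 < y * σ.re := mul_pos hy hσ
    by_contra hcon
    push_neg at hcon
    nlinarith
  have hsin0 : Real.sin (Φ 0) = 0 := by
    have h1 := (hkey 0).2
    have h2 := hRpos 0
    rw [← hsinΦ] at h1
    have h3 : Real.sin (Φ 0) * RhM P.roots 0 = 0 := by rw [h1]; ring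
    rcases mul_eq_zero.mp h3 with h | h
    · exact h
    · exact absurd h (ne_of_gt h2)
  have hcos0 : 0 < Real.cos (Φ 0) := by
    have h1 := (hkey 0).1
    have h2 := hRpos 0
    rw [← hcosΦ] at h1
    norm_num at h1
    by_contra hcon
    push_neg at hcon
    nlinarith
  -- trapping on the negative side
  have key1 : ∀ y : ℝ, y < 0 → Φ y ∈ Ioo (-π) 0 := by
    intro y hy
    obtain ⟨y₁, hy₁⟩ : ∃ y₁, (|Φ y₁| < π/2 ∧ y₁ < 0) ∧ y₁ ≤ y := by
      have hev1 : ∀ᶠ x in atBot, |Φ x| < π/2 := by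
        have := Metric.tendsto_nhds.mp hΦbot (π/2) (by positivity)
        simpa [Real.dist_eq] using this
      exact ((hev1.and (eventually_lt_atBot 0)).and (eventually_le_atBot y)).exists
    obtain ⟨⟨h₁abs, h₁neg⟩, h₁le⟩ := hy₁
    have h₁s := hsneg y₁ h₁neg
    have hππ := Real.pi_pos
    have h₁lt : Φ y₁ < 0 := by
      by_contra hcon
      push_neg at hcon
      have : 0 ≤ Real.sin (Φ y₁) := by
        apply Real.sin_nonneg_of_nonneg_of_le_pi hcon
        have h9 := (abs_lt.mp h₁abs).2
        linarith
      linarith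
    have h₁gt : -(π/2) < Φ y₁ := (abs_lt.mp h₁abs).1
    have hys := hsneg y hy
    constructor
    · by_contra hle
      push_neg at hle
      have hmem : -π ∈ Icc (Φ y) (Φ y₁) := ⟨hle, by linarith⟩
      obtain ⟨y', hy'mem, hy'⟩ := intermediate_value_Icc' h₁le hΦcont.continuousOn hmem
      have hlt : Real.sin (Φ y') < 0 := hsneg y' (lt_of_le_of_lt hy'mem.2 hy)
      rw [hy'] at hlt
      simp at hlt
    · by_contra hge
      push_neg at hge
      have h0lt : 0 < Φ y := by
        rcases lt_or_eq_of_le hge with h | h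
        · exact h
        · rw [← h] at hys; simp at hys
      have hmem : 0 ∈ Icc (Φ y₁) (Φ y) := ⟨h₁lt.le, h0lt.le⟩
      obtain ⟨y', hy'mem, hy'⟩ := intermediate_value_Icc h₁le hΦcont.continuousOn hmem
      have hlt : Real.sin (Φ y') < 0 := hsneg y' (lt_of_le_of_lt hy'mem.2 hy)
      rw [hy'] at hlt
      simp at hlt
  -- value at zero
  have hΦ0 : Φ 0 = 0 := by
    have htend : Tendsto Φ (𝓝[<] (0:ℝ)) (𝓝 (Φ 0)) :=
      (hΦcont.tendsto 0).mono_left nhdsWithin_le_nhds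
    have hub : Φ 0 ≤ 0 := by
      apply le_of_tendsto htend
      filter_upwards [self_mem_nhdsWithin] with y hy
      exact (key1 y hy).2.le
    have hlb : -π ≤ Φ 0 := by
      apply ge_of_tendsto htend
      filter_upwards [self_mem_nhdsWithin] with y hy
      exact (key1 y hy).1.le
    obtain ⟨j, hj⟩ := Real.sin_eq_zero_iff.mp hsin0
    have hππ := Real.pi_pos
    have hj1 : -1 ≤ j := by
      by_contra hcon
      push_neg at hcon
      have h9 : (j:ℝ) ≤ -2 := by exact_mod_cast (by omega : j ≤ -2)
      nlinarith
    have hj0 : j ≤ 0 := by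
      by_contra hcon
      push_neg at hcon
      have h9 : (1:ℝ) ≤ (j:ℝ) := by exact_mod_cast hcon
      nlinarith
    interval_cases j
    · exfalso
      rw [← hj] at hcos0
      simp at hcos0
      linarith
    · rw [← hj]; simp
  -- trapping on the positive side
  have key2 : ∀ y : ℝ, 0 < y → Φ y ∈ Ioo 0 π := by
    intro y hy
    obtain ⟨y₁, hy₁⟩ : ∃ y₁, (|Φ y₁| < π/2 ∧ 0 < y₁) ∧ y₁ ≤ y := by
      have htend0 : Tendsto Φ (𝓝[>] (0:ℝ)) (𝓝 0) := by
        have h8 : Tendsto Φ (𝓝[>] (0:ℝ)) (𝓝 (Φ 0)) :=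
          (hΦcont.tendsto 0).mono_left nhdsWithin_le_nhds
        rwa [hΦ0] at h8
      have hev1 : ∀ᶠ x in 𝓝[>] (0:ℝ), |Φ x| < π/2 := by
        have := Metric.tendsto_nhds.mp htend0 (π/2) (by positivity)
        simpa [Real.dist_eq] using this
      have hev2 : ∀ᶠ x in 𝓝[>] (0:ℝ), 0 < x := by
        filter_upwards [self_mem_nhdsWithin] with x hx
        exact hx
      have hev3 : ∀ᶠ x in 𝓝[>] (0:ℝ), x ≤ y := by
        have h9 : Ioo (0:ℝ) y ∈ 𝓝[>] (0:ℝ) := Ioo_mem_nhdsGT_of_mem ⟨le_refl 0, hy⟩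
        filter_upwards [h9] with x hx
        exact hx.2.le
      exact ((hev1.and hev2).and hev3).exists
    obtain ⟨⟨h₁abs, h₁pos⟩, h₁le⟩ := hy₁
    have h₁s := hspos y₁ h₁pos
    have hππ := Real.pi_pos
    have h₁gt : 0 < Φ y₁ := by
      by_contra hcon
      push_neg at hcon
      have : Real.sin (Φ y₁) ≤ 0 := by
        apply Real.sin_nonpos_of_nonpos_of_neg_pi_le hcon
        have h9 := (abs_lt.mp h₁abs).1
        linarith
      linarith
    have h₁lt : Φ y₁ < π/2 := (abs_lt.mp h₁abs).2
    have hys := hspos y hy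
    constructor
    · by_contra hge
      push_neg at hge
      have h0lt : Φ y < 0 := by
        rcases lt_or_eq_of_le hge with h | h
        · exact h
        · rw [h] at hys; simp at hys
      have hmem : 0 ∈ Icc (Φ y) (Φ y₁) := ⟨h0lt.le, h₁gt.le⟩
      obtain ⟨y', hy'mem, hy'⟩ := intermediate_value_Icc' h₁le hΦcont.continuousOn hmem
      have hlt : 0 < Real.sin (Φ y') := hspos y' (lt_of_lt_of_le h₁pos hy'mem.1)
      rw [hy'] at hlt
      simp at hlt
    · by_contra hle
      push_neg at hle
      have hmem : π ∈ Icc (Φ y₁) (Φ y) := ⟨by linarith, hle⟩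
      obtain ⟨y', hy'mem, hy'⟩ := intermediate_value_Icc h₁le hΦcont.continuousOn hmem
      have hlt : 0 < Real.sin (Φ y') := hspos y' (lt_of_lt_of_le h₁pos hy'mem.1)
      rw [hy'] at hlt
      simp at hlt
  -- conclude from the limit at +∞
  have hππ := Real.pi_pos
  have hTub : 2*π + ((1 - (m:ℤ) : ℤ) : ℝ) * (2 * π) ≤ π := by
    apply le_of_tendsto hΦtop
    filter_upwards [eventually_gt_atTop 0] with y hy
    exact (key2 y hy).2.le
  have hTlb : 0 ≤ 2*π + ((1 - (m:ℤ) : ℤ) : ℝ) * (2 * π) := by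
    apply ge_of_tendsto hΦtop
    filter_upwards [eventually_gt_atTop 0] with y hy
    exact (key2 y hy).1.le
  have hm2 : m = 2 := by
    have h1 : (m:ℝ) ≤ 2 := by push_cast at hTlb ⊢; nlinarith
    have h2 : (3:ℝ)/2 ≤ (m:ℝ) := by push_cast at hTub ⊢; nlinarith
    have h3 : m ≤ 2 := by exact_mod_cast h1
    have h4 : 2 ≤ m := by
      by_contra hcon
      push_neg at hcon
      have h9 : (m:ℝ) ≤ 1 := by exact_mod_cast (by omega : m ≤ 1)
      linarith
    omega
  exact ⟨hm2, by omega⟩
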